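/- Let n be a positive natural number and set μ = (sum over l from 1 to n-1 of l·sin(lπ/(2n))) + n/2. Then for every natural number j with 1 ≤ j ≤ n-1, μ·sin(jπ/(2n)) = (sum over l from 1 to j-1 of l·sin(lπ/(2n))) + (sum over l from j to n-1 of j·sin(lπ/(2n))) + j/2. -/

import Mathlib

open Finset

/-- Product-to-sum identity. -/
lemma buergi_aux_ptsum (θ x : ℝ) :
    Real.sin (x + θ) + Real.sin (x - θ) = 2 * Real.sin x * Real.cos θ := by
  rw [Real.sin_add, Real.sin_sub]; ring

/-- Telescoping sum lemma: with `θ = π/(2n)`,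
`(2 - 2cos θ) * ∑_{l=a}^{n-1} sin(lθ) = cos θ - 1 - sin((a-1)θ) + sin(aθ)`. -/
lemma buergi_aux_G (n a : ℕ) (hn : 0 < n) (ha : a ≤ n) :
    (2 - 2 * Real.cos (Real.pi / (2 * n))) *
      ∑ l ∈ Finset.Icc a (n - 1), Real.sin ((l : ℝ) * Real.pi / (2 * n))
    = Real.cos (Real.pi / (2 * n)) - 1
      - Real.sin (((a : ℝ) - 1) * Real.pi / (2 * n))
      + Real.sin ((a : ℝ) * Real.pi / (2 * n)) := by
  set θ := Real.pi / (2 * n) with hθ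
  -- the telescoping function
  set g : ℝ → ℝ := fun x => Real.sin ((x - 1) * θ) - Real.sin (x * θ) with hg
  have key : ∀ x : ℝ, (2 - 2 * Real.cos θ) * Real.sin (x * θ) = g (x + 1) - g x := by
    intro x
    have h := buergi_aux_ptsum θ (x * θ)
    have h1 : (x + 1 - 1) * θ = x * θ := by ring
    have h2 : (x + 1) * θ = x * θ + θ := by ring
    have h3 : (x - 1) * θ = x * θ - θ := by ring
    simp only [hg, h1, h2, h3]
    linarith [h]
  -- normalize the statement: `c * π / (2n) = c * θ`
  have hnorm : ∀ x : ℝ, x * Real.pi / (2 * n) = x * θ := by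
    intro x; rw [hθ]; ring
  -- convert Icc a (n-1) to a range sum
  have hIcc : Finset.Icc a (n - 1) = Finset.Ico a n := by
    ext x; simp only [Finset.mem_Icc, Finset.mem_Ico]; omega
  rw [hIcc]
  set f : ℕ → ℝ := fun i => g ((a : ℝ) + i) with hf
  have hsum : ∑ l ∈ Finset.Ico a n, Real.sin ((l : ℝ) * Real.pi / (2 * n))
      = ∑ i ∈ Finset.range (n - a), Real.sin (((a + i : ℕ) : ℝ) * θ) := by
    rw [Finset.sum_Ico_eq_sum_range]
    exact Finset.sum_congr rfl (fun i _ => by rw [hnorm])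
  rw [hsum, Finset.mul_sum]
  have hterm : ∀ i ∈ Finset.range (n - a),
      (2 - 2 * Real.cos θ) * Real.sin (((a + i : ℕ) : ℝ) * θ) = f (i + 1) - f i := by
    intro i _
    have hk := key ((a : ℝ) + i)
    simp only [hf]
    push_cast
    rw [show (a : ℝ) + ((i : ℝ) + 1) = (a : ℝ) + (i : ℝ) + 1 by ring]
    convert hk using 3
  rw [Finset.sum_congr rfl hterm, Finset.sum_range_sub f]
  have h0 : f 0 = g (a : ℝ) := by simp [hf]
  have hnn : f (n - a) = g (n : ℝ) := by
    simp only [hf]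
    congr 1
    push_cast [Nat.cast_sub ha]
    ring
  -- evaluate g n
  have hn0 : (n : ℝ) ≠ 0 := by exact_mod_cast hn.ne'
  have hnθ : (n : ℝ) * θ = Real.pi / 2 := by
    rw [hθ]; field_simp
  have hgn : g (n : ℝ) = Real.cos θ - 1 := by
    simp only [hg]
    have h1 : ((n : ℝ) - 1) * θ = Real.pi / 2 - θ := by
      rw [← hnθ]; ring
    rw [h1, hnθ, Real.sin_pi_div_two_sub, Real.sin_pi_div_two]
  rw [h0, hnn, hgn]
  simp only [hg, hnorm]
  ring

/-- Key identity: for `1 ≤ j ≤ n`,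
`(2-2cos θ) * (∑_{l=1}^{j-1} l sin(lθ) + ∑_{l=j}^{n-1} j sin(lθ) + j/2) = sin(jθ)`. -/
lemma buergi_aux_key (n : ℕ) (hn : 0 < n) :
    ∀ j : ℕ, 1 ≤ j → j ≤ n →
    (2 - 2 * Real.cos (Real.pi / (2 * n))) *
      ((∑ l ∈ Finset.Icc 1 (j - 1), (l : ℝ) * Real.sin ((l : ℝ) * Real.pi / (2 * n)))
        + (∑ l ∈ Finset.Icc j (n - 1), (j : ℝ) * Real.sin ((l : ℝ) * Real.pi / (2 * n)))
        + (j : ℝ) / 2)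
    = Real.sin ((j : ℝ) * Real.pi / (2 * n)) := by
  intro j hj1
  induction j, hj1 using Nat.le_induction with
  | base =>
    intro _
    have hG := buergi_aux_G n 1 hn hn
    rw [show ((1:ℕ):ℝ) - 1 = 0 by norm_num, show (0:ℝ) * Real.pi / (2 * n) = 0 by ring,
      Real.sin_zero] at hG
    rw [show (1:ℕ) - 1 = 0 from rfl, show Finset.Icc 1 0 = (∅ : Finset ℕ) from rfl,
      Finset.sum_empty]
    have hs : ∑ l ∈ Finset.Icc 1 (n-1), ((1:ℕ) : ℝ) * Real.sin ((l : ℝ) * Real.pi / (2 * n))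
        = ∑ l ∈ Finset.Icc 1 (n-1), Real.sin ((l : ℝ) * Real.pi / (2 * n)) := by
      simp
    rw [hs]
    push_cast at hG ⊢
    linear_combination hG
  | succ j hj ih =>
    intro hjn
    have hj' : j ≤ n := le_trans (Nat.le_succ j) hjn
    have hprev := ih hj'
    have hjn1 : j ≤ n - 1 := Nat.le_sub_one_of_lt hjn
    -- split the sums
    have hsplitA : ∑ l ∈ Finset.Icc 1 ((j + 1) - 1), (l : ℝ) * Real.sin ((l : ℝ) * Real.pi / (2 * n))
        = (∑ l ∈ Finset.Icc 1 (j - 1), (l : ℝ) * Real.sin ((l : ℝ) * Real.pi / (2 * n)))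
          + (j : ℝ) * Real.sin ((j : ℝ) * Real.pi / (2 * n)) := by
      have h1 : (j + 1) - 1 = (j - 1) + 1 := by omega
      rw [h1, Finset.sum_Icc_succ_top (by omega)]
      congr 2 <;> rw [show (j - 1) + 1 = j by omega]
    have hsplitB : ∑ l ∈ Finset.Icc j (n - 1), Real.sin ((l : ℝ) * Real.pi / (2 * n))
        = Real.sin ((j : ℝ) * Real.pi / (2 * n))
          + ∑ l ∈ Finset.Icc (j + 1) (n - 1), Real.sin ((l : ℝ) * Real.pi / (2 * n)) := by
      rw [show Finset.Icc (j+1) (n-1) = Finset.Ioc j (n-1) from Finset.Icc_add_one_left_eq_Ioc j (n-1)]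
      rw [← Finset.add_sum_Ioc_eq_sum_Icc hjn1]
    have hG := buergi_aux_G n (j + 1) hn hjn
    have hGcast : Real.sin ((((j + 1 : ℕ) : ℝ) - 1) * Real.pi / (2 * n))
        = Real.sin ((j : ℝ) * Real.pi / (2 * n)) := by push_cast; ring_nf
    rw [hGcast] at hG
    -- express B sums with constants pulled out
    have hBj : ∑ l ∈ Finset.Icc j (n - 1), (j : ℝ) * Real.sin ((l : ℝ) * Real.pi / (2 * n))
        = (j : ℝ) * ∑ l ∈ Finset.Icc j (n - 1), Real.sin ((l : ℝ) * Real.pi / (2 * n)) := by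
      rw [Finset.mul_sum]
    have hBj1 : ∑ l ∈ Finset.Icc (j+1) (n - 1), ((j+1 : ℕ) : ℝ) * Real.sin ((l : ℝ) * Real.pi / (2 * n))
        = ((j : ℝ) + 1) * ∑ l ∈ Finset.Icc (j+1) (n - 1), Real.sin ((l : ℝ) * Real.pi / (2 * n)) := by
      rw [Finset.mul_sum]
      refine Finset.sum_congr rfl fun l _ => ?_
      push_cast; ring
    rw [hBj, hsplitB] at hprev
    rw [hsplitA, hBj1]
    push_cast at hprev hG ⊢
    linear_combination hprev + hG

/-- The eigenvector equation for the sine vector: with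
`μ = ∑_{l=1}^{n-1} l·sin(lπ/(2n)) + n/2`, for all `1 ≤ j ≤ n-1`,
`μ·sin(jπ/(2n)) = ∑_{l=1}^{j-1} l·sin(lπ/(2n)) + ∑_{l=j}^{n-1} j·sin(lπ/(2n)) + j/2`. -/
theorem buergi_eigenvector_equation (n : ℕ) (hn : 0 < n) (μ : ℝ)
    (hμ : μ = (∑ l ∈ Finset.Icc 1 (n - 1),
        (l : ℝ) * Real.sin ((l : ℝ) * Real.pi / (2 * n))) + (n : ℝ) / 2) :
    ∀ j : ℕ, 1 ≤ j → j ≤ n - 1 →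
      μ * Real.sin ((j : ℝ) * Real.pi / (2 * n))
        = (∑ l ∈ Finset.Icc 1 (j - 1), (l : ℝ) * Real.sin ((l : ℝ) * Real.pi / (2 * n)))
          + (∑ l ∈ Finset.Icc j (n - 1), (j : ℝ) * Real.sin ((l : ℝ) * Real.pi / (2 * n)))
          + (j : ℝ) / 2 := by
  intro j hj1 hj2
  set θ := Real.pi / (2 * n) with hθ
  set d := 2 - 2 * Real.cos θ with hd
  -- d ≠ 0
  have hn0 : (n : ℝ) ≠ 0 := by exact_mod_cast hn.ne'
  have hθpos : 0 < θ := by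
    rw [hθ]
    apply div_pos Real.pi_pos
    positivity
  have hθlt : θ < Real.pi := by
    rw [hθ]
    rw [div_lt_iff₀ (by positivity)]
    nlinarith [Real.pi_pos, (by exact_mod_cast hn : (1:ℝ) ≤ n)]
  have hcos : Real.cos θ < 1 := by
    rcases lt_or_eq_of_le (Real.cos_le_one θ) with h | h
    · exact h
    · exfalso
      have := (Real.cos_eq_one_iff_of_lt_of_lt
        (by linarith [Real.pi_pos] : -(2 * Real.pi) < θ)
        (by linarith [Real.pi_pos] : θ < 2 * Real.pi)).1 h
      exact absurd this hθpos.ne'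
  have hd0 : d ≠ 0 := by rw [hd]; nlinarith
  -- μ satisfies d * μ = 1 (key lemma at j = n)
  have hμ1 : d * μ = 1 := by
    have := buergi_aux_key n hn n hn le_rfl
    have hempty : Finset.Icc n (n - 1) = ∅ := by
      apply Finset.Icc_eq_empty
      omega
    rw [hempty, Finset.sum_empty] at this
    have hsn : Real.sin ((n : ℝ) * Real.pi / (2 * n)) = 1 := by
      have : (n : ℝ) * Real.pi / (2 * n) = Real.pi / 2 := by field_simp
      rw [this, Real.sin_pi_div_two]
    rw [hsn, add_zero] at this
    rw [hμ, hd]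
    linarith [this]
  -- key lemma at j
  have hkey := buergi_aux_key n hn j hj1 (le_trans hj2 (Nat.sub_le n 1))
  -- conclude: μ * sin(jθ) = μ * (d * RHS) = (d * μ) * RHS = RHS
  calc μ * Real.sin ((j : ℝ) * Real.pi / (2 * n))
      = μ * (d * ((∑ l ∈ Finset.Icc 1 (j - 1), (l : ℝ) * Real.sin ((l : ℝ) * Real.pi / (2 * n)))
          + (∑ l ∈ Finset.Icc j (n - 1), (j : ℝ) * Real.sin ((l : ℝ) * Real.pi / (2 * n)))
          + (j : ℝ) / 2)) := by rw [hkey]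
    _ = (d * μ) * ((∑ l ∈ Finset.Icc 1 (j - 1), (l : ℝ) * Real.sin ((l : ℝ) * Real.pi / (2 * n)))
          + (∑ l ∈ Finset.Icc j (n - 1), (j : ℝ) * Real.sin ((l : ℝ) * Real.pi / (2 * n)))
          + (j : ℝ) / 2) := by ring
    _ = _ := by rw [hμ1, one_mul]
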